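/- Let X be a topological space whose open sets are measurable, let G be a measurable space, let α be a Markov kernel from G × X to X, and let ι be a Markov kernel from G to G. Suppose the following composite identity holds: for every g ∈ G, x ∈ X, and measurable A ⊆ X, ∫ (∫ α(g', x')(A) dι(g)(g')) dα(g, x)(x') = 1 if x ∈ A and = 0 otherwise. Then for every open U ⊆ X that is invariant (i.e., α(g, x)(U) = 1 for all x ∈ U and g ∈ G), one has α(g, x)(U) = 1 if x ∈ U and α(g, x)(U) = 0 if x ∉ U, for all g ∈ G and x ∈ X. -/

import Mathlib

open MeasureTheory
open scoped Classical

/-- If acting by `g` and then by the "inverse" kernel `ι` is the identity kernel,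
then on every invariant open set the action kernel `α` acts as the indicator
function: `α (g, x) U = 1` if `x ∈ U` and `= 0` if `x ∉ U`. -/
theorem kernel_action_indicator_on_invariant_opens
    {X G : Type*} [TopologicalSpace X] [MeasurableSpace X]
    [OpensMeasurableSpace X] [MeasurableSpace G]
    (α : ProbabilityTheory.Kernel (G × X) X)
    [ProbabilityTheory.IsMarkovKernel α]
    (ι : ProbabilityTheory.Kernel G G) [ProbabilityTheory.IsMarkovKernel ι]
    (hcomp : ∀ (g : G) (x : X) (A : Set X), MeasurableSet A →
      (∫⁻ x', (∫⁻ g', α (g', x') A ∂(ι g)) ∂(α (g, x))) =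
        if x ∈ A then 1 else 0) :
    ∀ U : Set X, IsOpen U → (∀ (g : G), ∀ x ∈ U, α (g, x) U = 1) →
      ∀ (g : G) (x : X), α (g, x) U = if x ∈ U then 1 else 0 := by
  intro U hU hinv g x
  by_cases hx : x ∈ U
  · simp [hx, hinv g x hx]
  · simp only [hx, if_false]
    have h0 := hcomp g x U hU.measurableSet
    rw [if_neg hx] at h0
    have hpt : ∀ x', U.indicator (fun _ => (1 : ENNReal)) x'
        ≤ ∫⁻ g', α (g', x') U ∂(ι g) := by
      intro x'
      by_cases h' : x' ∈ U
      · have : (∫⁻ g', α (g', x') U ∂(ι g)) = 1 := by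
          rw [lintegral_congr fun g' => hinv g' x' h', lintegral_one, measure_univ]
        simp [h', this]
      · simp [h']
    have hle : α (g, x) U ≤ ∫⁻ x', (∫⁻ g', α (g', x') U ∂(ι g)) ∂(α (g, x)) := by
      calc α (g, x) U
          = ∫⁻ x', U.indicator (fun _ => (1 : ENNReal)) x' ∂(α (g, x)) := by
            simp [lintegral_indicator hU.measurableSet]
        _ ≤ _ := lintegral_mono hpt
    rw [h0] at hle
    exact le_antisymm hle zero_le
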